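/- Let q be a prime power and f + 𝔪^{[q^m]} a GL_n(F_q)-invariant element of S/𝔪^{[q^m]} with f homogeneous in x_1,...,x_n having no monomial in 𝔪^{[q^m]}. Then either f is a scalar multiple of (x_1 x_2 ⋯ x_n)^{q^m−1}, or every monomial M of f satisfies deg_{x_i}(M) ≤ q^m − q for all i. -/

import Mathlib

open MvPolynomial Matrix

/-- The `m`-th Frobenius power of the irrelevant ideal, `(x_1^N, …, x_n^N)`. -/
noncomputable def frobIdeal (F : Type) [Field F] (n N : ℕ) : Ideal (MvPolynomial (Fin n) F) :=
  Ideal.span (Set.range fun i : Fin n => (X i : MvPolynomial (Fin n) F) ^ N)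

/-- The substitution action of `g ∈ GL_n(F)` on polynomials: `x_i ↦ Σ_j g_{ij} x_j`. -/
noncomputable def gSub {F : Type} [Field F] {n : ℕ} (g : GL (Fin n) F) :
    MvPolynomial (Fin n) F →ₐ[F] MvPolynomial (Fin n) F :=
  aeval fun i => ∑ j, C ((g : Matrix (Fin n) (Fin n) F) i j) * X j

open Finset

-- small coeff lemma
lemma aux_small_coeff {F : Type} [Field F] {n N : ℕ} {h : MvPolynomial (Fin n) F}
    (hh : h ∈ Ideal.span (Set.range fun i : Fin n => (X i : MvPolynomial (Fin n) F) ^ N))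
    {M : Fin n →₀ ℕ} (hM : ∀ i, M i < N) : h.coeff M = 0 := by
  induction hh using Submodule.span_induction generalizing M with
  | mem x hx =>
    obtain ⟨i, rfl⟩ := hx
    simp only []; rw [X_pow_eq_monomial, coeff_monomial, if_neg]
    intro hEq
    have := hM i
    rw [← hEq, Finsupp.single_eq_same] at this
    omega
  | zero => simp
  | add x y _ _ hx hy => simp [coeff_add, hx hM, hy hM]
  | smul r x _ hx =>
    rw [smul_eq_mul, coeff_mul]
    apply Finset.sum_eq_zero
    rintro ⟨a, b⟩ hab
    rw [Finset.HasAntidiagonal.mem_antidiagonal] at hab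
    have : ∀ i, b i < N := fun i => lt_of_le_of_lt (by
      have := congrArg (fun s => s i) hab
      simp at this; omega) (hM i)
    simp [hx this]

lemma aux_prod_erase {F : Type} [Field F] {n : ℕ} (i : Fin n) (N : Fin n →₀ ℕ) :
    (monomial (N.erase i) (1 : F)) = ∏ k ∈ Finset.univ.erase i, X k ^ N k := by
  rw [← prod_X_pow_eq_monomial]
  rw [Finset.prod_subset (s₁ := (N.erase i).support) (s₂ := Finset.univ.erase i)
    (by
      intro k hk
      have hki : k ≠ i := by
        by_contra h
        subst h
        simp [Finsupp.notMem_support_iff] at hk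
      exact Finset.mem_erase.mpr ⟨hki, Finset.mem_univ k⟩)
    (fun k _ hk => by rw [Finsupp.notMem_support_iff.mp hk, pow_zero])]
  apply Finset.prod_congr rfl
  intro k hk
  have hki : k ≠ i := Finset.ne_of_mem_erase hk
  congr 1
  simp [Finsupp.erase_ne hki]

lemma aux_aeval_single {F : Type} [Field F] {n : ℕ} (i : Fin n)
    (v : Fin n → MvPolynomial (Fin n) F) (hv : ∀ k, k ≠ i → v k = X k)
    (N : Fin n →₀ ℕ) (c : F) :
    aeval v (monomial N c) = C c * (v i) ^ (N i) * monomial (N.erase i) 1 := by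
  rw [aeval_monomial]
  have h1 : (N.prod fun k e => v k ^ e) = ∏ k : Fin n, v k ^ N k :=
    Finsupp.prod_fintype _ _ (fun _ => pow_zero _)
  rw [h1, ← Finset.mul_prod_erase Finset.univ _ (Finset.mem_univ i)]
  rw [aux_prod_erase i N]
  rw [show (algebraMap F (MvPolynomial (Fin n) F)) c = C c from rfl]
  have h3 : ∏ k ∈ Finset.univ.erase i, v k ^ N k = ∏ k ∈ Finset.univ.erase i, X k ^ N k :=
    Finset.prod_congr rfl (fun k hk => by rw [hv k (Finset.ne_of_mem_erase hk)])
  rw [h3]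
  ring

lemma aux_monomial_assemble {F : Type} [Field F] {n : ℕ} (i : Fin n)
    (N : Fin n →₀ ℕ) (a : F) :
    C a * (X i : MvPolynomial (Fin n) F) ^ (N i) * monomial (N.erase i) 1 = monomial N a := by
  rw [X_pow_eq_monomial, C_apply, monomial_mul, monomial_mul, zero_add,
    Finsupp.single_add_erase, mul_one, mul_one]

lemma aux_diag_coeff {F : Type} [Field F] {n : ℕ} (i : Fin n) (t : F)
    (f : MvPolynomial (Fin n) F) (M : Fin n →₀ ℕ) :
    coeff M (aeval (fun k => if k = i then C t * X i else X k) f)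
      = t ^ (M i) * coeff M f := by
  set v : Fin n → MvPolynomial (Fin n) F := fun k => if k = i then C t * X i else X k with hv
  have hv' : ∀ k, k ≠ i → v k = X k := fun k hk => by simp [hv, hk]
  have hvi : v i = C t * X i := by simp [hv]
  conv_lhs => rw [f.as_sum, map_sum]
  rw [coeff_sum]
  have hterm : ∀ N ∈ f.support, coeff M (aeval v (monomial N (coeff N f)))
      = if N = M then t ^ (M i) * coeff N f else 0 := by
    intro N _
    rw [aux_aeval_single i v hv' N, hvi, mul_pow, ← C_pow,
      show C (coeff N f) * (C (t ^ N i) * X i ^ N i) = C (t ^ N i * coeff N f) * X i ^ N i by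
        rw [← mul_assoc, ← C_mul, mul_comm (coeff N f) (t ^ N i)],
      aux_monomial_assemble, coeff_monomial]
    split_ifs with h
    · subst h; rfl
    · rfl
  rw [Finset.sum_congr rfl hterm, Finset.sum_ite_eq' f.support M
    (fun N => t ^ (M i) * coeff N f)]
  split_ifs with h
  · rfl
  · rw [MvPolynomial.notMem_support_iff.mp h, mul_zero]

lemma aux_factor {F : Type} [Field F] {n : ℕ} (i j : Fin n) (c : F) (a k : ℕ)
    (N : Fin n →₀ ℕ) :
    C c * ((X i : MvPolynomial (Fin n) F) ^ k * X j ^ (a - k) * (a.choose k : MvPolynomial (Fin n) F))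
      * monomial (N.erase i) 1
    = monomial (Finsupp.single i k + Finsupp.single j (a - k) + N.erase i)
        (c * (a.choose k : F)) := by
  rw [X_pow_eq_monomial, X_pow_eq_monomial,
    ← map_natCast (C : F →+* MvPolynomial (Fin n) F) (a.choose k),
    C_apply, C_apply, monomial_mul, monomial_mul, monomial_mul, monomial_mul]
  congr 1
  · simp [add_assoc]
  · ring

lemma aux_transvection_term {F : Type} [Field F] {n : ℕ} {i j : Fin n} (hij : j ≠ i)
    {Q : ℕ} (hQ : 2 ≤ Q) {M M' N : Fin n →₀ ℕ} (c : F)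
    (hM'i : M' i = Q - 2) (hM'j : M' j = M j + 1) (hM'k : ∀ l, l ≠ i → l ≠ j → M' l = M l)
    (hMi : M i = Q - 1) (hNle : ∀ l, N l ≤ Q - 1) :
    coeff M' (aeval (fun k => if k = i then X i + X j else X k) (monomial N c))
      = c * ((if N = M' then 1 else 0) + (if N = M then ((Q - 1 : ℕ) : F) else 0)) := by
  classical
  set v : Fin n → MvPolynomial (Fin n) F := fun k => if k = i then X i + X j else X k with hv
  have hv' : ∀ k, k ≠ i → v k = X k := fun k hk => by simp [hv, hk]
  have hvi : v i = X i + X j := by simp [hv]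
  set cond : ℕ → Prop :=
    fun k => Finsupp.single i k + Finsupp.single j (N i - k) + N.erase i = M' with hcond
  have hcond_i : ∀ k, cond k → k = Q - 2 := by
    intro k hk
    have h := DFunLike.congr_fun hk i
    rw [Finsupp.add_apply, Finsupp.add_apply, Finsupp.single_eq_same,
      Finsupp.single_eq_of_ne' hij, Finsupp.erase_same, hM'i] at h
    omega
  have hcond_j : ∀ k, cond k → (N i - k) + N j = M j + 1 := by
    intro k hk
    have h := DFunLike.congr_fun hk j
    rw [Finsupp.add_apply, Finsupp.add_apply, Finsupp.single_eq_of_ne' (Ne.symm hij),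
      Finsupp.single_eq_same, Finsupp.erase_ne hij, hM'j] at h
    omega
  have hcond_l : ∀ k, cond k → ∀ l, l ≠ i → l ≠ j → N l = M l := by
    intro k hk l hli hlj
    have h := DFunLike.congr_fun hk l
    rw [Finsupp.add_apply, Finsupp.add_apply, Finsupp.single_eq_of_ne' (Ne.symm hli),
      Finsupp.single_eq_of_ne' (Ne.symm hlj), Finsupp.erase_ne hli, hM'k l hli hlj] at h
    omega
  rw [aux_aeval_single i v hv' N c, hvi, add_pow, Finset.mul_sum, Finset.sum_mul, coeff_sum]
  have hterm : ∀ k ∈ Finset.range (N i + 1),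
      coeff M' (C c * ((X i : MvPolynomial (Fin n) F) ^ k * X j ^ (N i - k)
          * ((N i).choose k : MvPolynomial (Fin n) F)) * monomial (N.erase i) 1)
        = if cond k then c * ((N i).choose k : F) else 0 := by
    intro k _
    rw [aux_factor, coeff_monomial]
  rw [Finset.sum_congr rfl hterm]
  have hsum : ∑ k ∈ Finset.range (N i + 1), (if cond k then c * ((N i).choose k : F) else 0)
      = if cond (Q - 2) then c * ((N i).choose (Q - 2) : F) else 0 := by
    apply Finset.sum_eq_single (Q - 2)
    · intro b _ hb
      rw [if_neg (fun hc => hb (hcond_i b hc))]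
    · intro hout
      rw [Finset.mem_range, not_lt] at hout
      have hlt : N i < Q - 2 := by omega
      split_ifs
      · rw [Nat.choose_eq_zero_of_lt hlt, Nat.cast_zero, mul_zero]
      · rfl
  rw [hsum]
  by_cases hc : cond (Q - 2)
  · rw [if_pos hc]
    have haj := hcond_j _ hc
    have hal := hcond_l _ hc
    have hNi : N i ≤ Q - 1 := hNle i
    rcases lt_trichotomy (N i) (Q - 2) with h1 | h1 | h1
    · rw [Nat.choose_eq_zero_of_lt h1, Nat.cast_zero, mul_zero]
      have hnM' : N ≠ M' := fun h => by rw [h, hM'i] at h1; omega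
      have hnM : N ≠ M := fun h => by rw [h, hMi] at h1; omega
      rw [if_neg hnM', if_neg hnM, add_zero, mul_zero]
    · have hNj : N j = M j + 1 := by omega
      have hNM' : N = M' := by
        ext l
        by_cases hli : l = i
        · subst hli; omega
        · by_cases hlj : l = j
          · subst hlj; rw [hNj, hM'j]
          · rw [hal l hli hlj, hM'k l hli hlj]
      have hnM : N ≠ M := by
        intro h
        rw [h, hMi] at h1
        omega
      rw [if_pos hNM', if_neg hnM, h1, Nat.choose_self]
      simp
    · have h2 : N i = Q - 1 := by omega
      have hNj : N j = M j := by omega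
      have hNM : N = M := by
        ext l
        by_cases hli : l = i
        · subst hli; omega
        · by_cases hlj : l = j
          · subst hlj; exact hNj
          · exact hal l hli hlj
      have hnM' : N ≠ M' := by
        intro h
        rw [h, hM'i] at h2
        omega
      rw [if_pos hNM, if_neg hnM', zero_add, h2]
      congr 2
      rw [show Q - 2 = (Q - 1) - 1 by omega, Nat.choose_symm (by omega), Nat.choose_one_right]
  · rw [if_neg hc]
    have hnM' : N ≠ M' := by
      intro h
      apply hc
      show Finsupp.single i (Q - 2) + Finsupp.single j (N i - (Q - 2)) + N.erase i = M'
      have hNi2 : N i = Q - 2 := by rw [h]; exact hM'i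
      rw [show N i - (Q - 2) = 0 by omega, Finsupp.single_zero, add_zero,
        show Q - 2 = N i from hNi2.symm, Finsupp.single_add_erase, h]
    have hnM : N ≠ M := by
      intro h
      apply hc
      show Finsupp.single i (Q - 2) + Finsupp.single j (N i - (Q - 2)) + N.erase i = M'
      have hNi : N i = Q - 1 := by rw [h]; exact hMi
      rw [show N i - (Q - 2) = 1 by omega]
      ext l
      by_cases hli : l = i
      · rw [hli, Finsupp.add_apply, Finsupp.add_apply, Finsupp.single_eq_same,
          Finsupp.single_eq_of_ne' hij, Finsupp.erase_same, hM'i]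
        omega
      · by_cases hlj : l = j
        · rw [hlj, Finsupp.add_apply, Finsupp.add_apply,
            Finsupp.single_eq_of_ne' (Ne.symm hij), Finsupp.single_eq_same,
            Finsupp.erase_ne hij, hM'j]
          have : N j = M j := by rw [h]
          omega
        · rw [Finsupp.add_apply, Finsupp.add_apply, Finsupp.single_eq_of_ne' (Ne.symm hli),
            Finsupp.single_eq_of_ne' (Ne.symm hlj), Finsupp.erase_ne hli, hM'k l hli hlj]
          have : N l = M l := by rw [h]
          omega
    rw [if_neg hnM', if_neg hnM, add_zero, mul_zero]
lemma aux_diag_row {F : Type} [Field F] {n : ℕ} (w : Fin n → F) (k : Fin n) :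
    (∑ l, C (Matrix.diagonal w k l) * X l : MvPolynomial (Fin n) F) = C (w k) * X k := by
  rw [Finset.sum_eq_single k]
  · rw [Matrix.diagonal_apply_eq]
  · intro b _ hb
    rw [Matrix.diagonal_apply_ne _ (Ne.symm hb), C_0, zero_mul]
  · intro h
    exact absurd (Finset.mem_univ k) h

lemma aux_trans_row {F : Type} [Field F] {n : ℕ} (i j : Fin n) (hij : i ≠ j) (k : Fin n) :
    (∑ l, C ((Matrix.transvection i j (1 : F)) k l) * X l : MvPolynomial (Fin n) F)
      = if k = i then X i + X j else X k := by
  have hT : ∀ l, (Matrix.transvection i j (1 : F)) k l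
      = (if k = l then 1 else 0) + (if i = k ∧ j = l then 1 else 0) := by
    intro l
    rw [Matrix.transvection, Matrix.add_apply, Matrix.one_apply]
    rfl
  have hsplit : (∑ l, C ((Matrix.transvection i j (1 : F)) k l) * X l : MvPolynomial (Fin n) F)
      = (∑ l, C (if k = l then (1:F) else 0) * X l)
        + ∑ l, C (if i = k ∧ j = l then (1:F) else 0) * X l := by
    rw [← Finset.sum_add_distrib]
    apply Finset.sum_congr rfl
    intro l _
    rw [hT l, C_add, add_mul]
  rw [hsplit]
  have h1 : (∑ l, C (if k = l then (1:F) else 0) * X l : MvPolynomial (Fin n) F) = X k := by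
    rw [Finset.sum_eq_single k]
    · rw [if_pos rfl, C_1, one_mul]
    · intro b _ hb
      rw [if_neg (Ne.symm hb), C_0, zero_mul]
    · intro h
      exact absurd (Finset.mem_univ k) h
  have h2 : (∑ l, C (if i = k ∧ j = l then (1:F) else 0) * X l : MvPolynomial (Fin n) F)
      = if k = i then X j else 0 := by
    by_cases hk : k = i
    · subst hk
      rw [if_pos rfl, Finset.sum_eq_single j]
      · rw [if_pos ⟨rfl, rfl⟩, C_1, one_mul]
      · intro b _ hb
        rw [if_neg (fun h => hb (h.2.symm)), C_0, zero_mul]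
      · intro h
        exact absurd (Finset.mem_univ j) h
    · rw [if_neg hk]
      apply Finset.sum_eq_zero
      intro b _
      rw [if_neg (fun h => hk (h.1.symm)), C_0, zero_mul]
  rw [h1, h2]
  by_cases hk : k = i
  · subst hk
    rw [if_pos rfl, if_pos rfl]
  · rw [if_neg hk, if_neg hk, add_zero]

/-- If `f + 𝔪^{[q^m]}` is `GL_n(F_q)`-invariant, `f` is homogeneous and no monomial of
`f` lies in `𝔪^{[q^m]}`, then either `f` is a scalar multiple of `(x_1⋯x_n)^{q^m−1}`
or every monomial `M` of `f` has `deg_{x_i}(M) ≤ q^m − q` for all `i`. -/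
theorem stmt_19 (q n m : ℕ) (F : Type) [Field F] [Fintype F] (hq : Fintype.card F = q)
    (hm : 1 ≤ m) (hn : 1 ≤ n)
    (f : MvPolynomial (Fin n) F) (d : ℕ) (hf : f.IsHomogeneous d)
    (hno : ∀ M : Fin n →₀ ℕ, f.coeff M ≠ 0 → ∀ i, M i < q ^ m)
    (hinv : ∀ g : GL (Fin n) F, gSub g f - f ∈ frobIdeal F n (q ^ m)) :
    (∃ c : F, f = C c * ∏ i : Fin n, X i ^ (q ^ m - 1))
      ∨ ∀ M : Fin n →₀ ℕ, f.coeff M ≠ 0 → ∀ i, M i ≤ q ^ m - q := by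
  classical
  set Q := q ^ m with hQdef
  have hq2 : 2 ≤ q := hq ▸ Fintype.one_lt_card
  have hqQ : q ≤ Q := Nat.le_self_pow (by omega) q
  have hQ2 : 2 ≤ Q := le_trans hq2 hqQ
  have hqF : (q : F) = 0 := by rw [← hq]; exact FiniteField.cast_card_eq_zero F
  have hQF : ((Q - 1 : ℕ) : F) = -1 := by
    rw [Nat.cast_sub (by omega), Nat.cast_one, hQdef, Nat.cast_pow, hqF,
      zero_pow (by omega), zero_sub]
  have hgSub : ∀ g : GL (Fin n) F,
      gSub g f = aeval (fun k => ∑ l, C ((g : Matrix (Fin n) (Fin n) F) k l) * X l) f :=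
    fun g => rfl
  have hassemble : ∀ (a : Fin n →₀ ℕ) (r : F),
      (∑ N ∈ f.support, coeff N f * (if N = a then r else 0)) = coeff a f * r := by
    intro a r
    rw [Finset.sum_congr rfl (fun N _ => by rw [mul_ite, mul_zero]),
      Finset.sum_ite_eq' f.support a fun N => coeff N f * r]
    split_ifs with h
    · rfl
    · rw [MvPolynomial.notMem_support_iff.mp h, zero_mul]
  -- Step: divisibility of exponents by q - 1
  have hdvd : ∀ M : Fin n →₀ ℕ, f.coeff M ≠ 0 → ∀ i, (q - 1) ∣ M i := by
    intro M hMc i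
    have hpow : ∀ t : Fˣ, (t : F) ^ (M i) = 1 := by
      intro t
      set w : Fin n → F := fun k => if k = i then (t : F) else 1 with hw
      set w' : Fin n → F := fun k => if k = i then ((t⁻¹ : Fˣ) : F) else 1 with hw'
      have hww' : Matrix.diagonal w * Matrix.diagonal w' = 1 := by
        rw [Matrix.diagonal_mul_diagonal,
          show (fun k => w k * w' k) = fun _ => (1 : F) from funext fun k => by
            by_cases hk : k = i <;> simp [hw, hw', hk],
          Matrix.diagonal_one]
      have hw'w : Matrix.diagonal w' * Matrix.diagonal w = 1 := by
        rw [Matrix.diagonal_mul_diagonal,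
          show (fun k => w' k * w k) = fun _ => (1 : F) from funext fun k => by
            by_cases hk : k = i <;> simp [hw, hw', hk],
          Matrix.diagonal_one]
      set gd : GL (Fin n) F := ⟨Matrix.diagonal w, Matrix.diagonal w', hww', hw'w⟩ with hgd
      have hcoe : (gd : Matrix (Fin n) (Fin n) F) = Matrix.diagonal w := rfl
      have hveq : (fun k => ∑ l, C ((gd : Matrix (Fin n) (Fin n) F) k l) * X l)
          = (fun k => if k = i then C ((t : F)) * X i else X k) := by
        funext k
        rw [hcoe, aux_diag_row]
        by_cases hk : k = i
        · subst hk; rw [if_pos rfl]; simp [hw]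
        · rw [if_neg hk]; simp [hw, hk]
      have hz := aux_small_coeff (hinv gd) (hno M hMc)
      rw [coeff_sub, hgSub gd, hveq, aux_diag_coeff, sub_eq_zero] at hz
      exact mul_right_cancel₀ hMc (hz.trans (one_mul (coeff M f)).symm)
    rw [← hq]
    exact (FiniteField.forall_pow_eq_one_iff (K := F) (M i)).mp fun t => Units.ext (by
      rw [Units.val_pow_eq_pow_val, Units.val_one]; exact hpow t)
  by_cases hsmall : ∀ M : Fin n →₀ ℕ, f.coeff M ≠ 0 → ∀ i, M i ≤ Q - q
  · exact Or.inr hsmall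
  left
  push_neg at hsmall
  obtain ⟨M0, hM0c, i0, hM0gt⟩ := hsmall
  have hQdvd : (q - 1) ∣ (Q - 1) := by
    have := Nat.sub_dvd_pow_sub_pow q 1 m
    simpa using this
  have hM0top : ∀ i, Q - q < M0 i → M0 i = Q - 1 := by
    intro i hi
    have hr : (q - 1) ∣ (Q - 1 - M0 i) := Nat.dvd_sub hQdvd (hdvd M0 hM0c i)
    have hlt := hno M0 hM0c i
    have hrlt : Q - 1 - M0 i < q - 1 := by omega
    have := Nat.eq_zero_of_dvd_of_lt hr hrlt
    omega
  have hM0i0 : M0 i0 = Q - 1 := hM0top i0 hM0gt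
  -- every coordinate of M0 is Q - 1
  have hMfull : ∀ l, M0 l = Q - 1 := by
    intro l
    rcases eq_or_ne l i0 with rfl | hl
    · exact hM0i0
    by_contra hne
    have hlle : M0 l ≤ Q - 2 := by
      have h1 := hno M0 hM0c l
      omega
    -- the transvection x_{i0} ↦ x_{i0} + x_l
    set M' : Fin n →₀ ℕ := M0.erase i0 + Finsupp.single i0 (Q - 2) + Finsupp.single l 1
      with hM'def
    have hM'i0 : M' i0 = Q - 2 := by
      rw [hM'def, Finsupp.add_apply, Finsupp.add_apply, Finsupp.erase_same,
        Finsupp.single_eq_same, Finsupp.single_eq_of_ne' hl]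
      omega
    have hM'l : M' l = M0 l + 1 := by
      rw [hM'def, Finsupp.add_apply, Finsupp.add_apply, Finsupp.erase_ne hl,
        Finsupp.single_eq_of_ne' (Ne.symm hl), Finsupp.single_eq_same]
      omega
    have hM'k : ∀ k, k ≠ i0 → k ≠ l → M' k = M0 k := by
      intro k hki hkl
      rw [hM'def, Finsupp.add_apply, Finsupp.add_apply, Finsupp.erase_ne hki,
        Finsupp.single_eq_of_ne' (Ne.symm hki), Finsupp.single_eq_of_ne' (Ne.symm hkl),
        add_zero, add_zero]
    have hM'small : ∀ k, M' k < Q := by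
      intro k
      rcases eq_or_ne k i0 with rfl | hki
      · omega
      rcases eq_or_ne k l with rfl | hkl
      · omega
      rw [hM'k k hki hkl]
      exact hno M0 hM0c k
    have hii : i0 ≠ l := Ne.symm hl
    set gt : GL (Fin n) F := ⟨Matrix.transvection i0 l (1 : F),
      Matrix.transvection i0 l (-1 : F),
      by rw [Matrix.transvection_mul_transvection_same i0 l hii, add_neg_cancel,
        Matrix.transvection_zero],
      by rw [Matrix.transvection_mul_transvection_same i0 l hii, neg_add_cancel,
        Matrix.transvection_zero]⟩ with hgt
    have hcoe : (gt : Matrix (Fin n) (Fin n) F) = Matrix.transvection i0 l 1 := rfl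
    have hveq : (fun k => ∑ l', C ((gt : Matrix (Fin n) (Fin n) F) k l') * X l')
        = (fun k => if k = i0 then X i0 + X l else X k) := by
      funext k
      rw [hcoe, aux_trans_row i0 l hii k]
    have hcM' : coeff M' (gSub gt f)
        = coeff M' f * 1 + coeff M0 f * ((Q - 1 : ℕ) : F) := by
      rw [hgSub gt, hveq]
      conv_lhs => rw [f.as_sum]
      rw [map_sum, coeff_sum]
      rw [Finset.sum_congr rfl (fun N hN => aux_transvection_term hl hQ2 (coeff N f)
        hM'i0 hM'l hM'k hM0i0 (fun k => by
          have := hno N (MvPolynomial.mem_support_iff.mp hN) k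
          omega))]
      rw [Finset.sum_congr rfl (fun N _ => mul_add (coeff N f) _ _),
        Finset.sum_add_distrib, hassemble M' 1, hassemble M0 ((Q - 1 : ℕ) : F)]
    have hz := aux_small_coeff (hinv gt) hM'small
    rw [coeff_sub, hcM', mul_one, hQF] at hz
    exact hM0c (by linear_combination -hz)
  -- conclude: f is a scalar multiple of the full monomial
  have hdegsum : ∀ N : Fin n →₀ ℕ, coeff N f ≠ 0 → (∑ l, N l) = d := by
    intro N hNc
    have h1 : N.degree = d := by
      by_contra hne
      exact hNc (hf.coeff_eq_zero hne)
    rw [← h1]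
    exact (Finset.sum_subset (Finset.subset_univ _)
      (fun x _ hx => Finsupp.notMem_support_iff.mp hx)).symm
  have hsupp : ∀ N : Fin n →₀ ℕ, coeff N f ≠ 0 → N = M0 := by
    intro N hNc
    have hsum : (∑ l, N l) = ∑ l, M0 l := by
      rw [hdegsum N hNc, hdegsum M0 hM0c]
    have hle : ∀ l ∈ Finset.univ, N l ≤ M0 l := by
      intro l _
      have := hno N hNc l
      rw [hMfull l]
      omega
    have := (Finset.sum_eq_sum_iff_of_le hle).mp hsum
    ext l
    exact this l (Finset.mem_univ l)
  have hfm : f = monomial M0 (coeff M0 f) := by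
    ext N
    rw [coeff_monomial]
    split_ifs with h
    · rw [h]
    · by_contra hc
      exact h ((hsupp N hc).symm)
  refine ⟨coeff M0 f, ?_⟩
  have hMsup : M0.support = Finset.univ := by
    ext l
    simp only [Finsupp.mem_support_iff, Finset.mem_univ, iff_true]
    rw [hMfull l]
    omega
  conv_lhs => rw [hfm]
  calc monomial M0 (coeff M0 f) = C (coeff M0 f) * monomial M0 1 := by
        rw [C_mul_monomial, mul_one]
    _ = C (coeff M0 f) * ∏ x ∈ M0.support, X x ^ M0 x := by rw [prod_X_pow_eq_monomial]
    _ = C (coeff M0 f) * ∏ x : Fin n, X x ^ (Q - 1) := by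
        rw [hMsup]
        exact congrArg _ (Finset.prod_congr rfl fun x _ => by rw [hMfull x])
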